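/- Let H ∈ ℝ^{n×n} be symmetric positive semidefinite and p ∈ ℝⁿ, with Φ(x) := xᵀHx + 2pᵀx and Ψ(x, x̃) := xᵀHx̃ + pᵀx + pᵀx̃. Then for every subset 𝒳 ⊆ ℝⁿ and every M ∈ ℝ, M is an upper bound of {Φ(x) : x ∈ 𝒳} if and only if M is an upper bound of {Ψ(x, x̃) : x ∈ 𝒳, x̃ ∈ 𝒳}. In particular, the supremum of Φ over 𝒳 equals the supremum of Ψ over 𝒳 × 𝒳 (Konno's theorem reducing the concave QP to a bilinear program). -/

import Mathlib

open Matrix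

noncomputable section

lemma konno_key {n : ℕ} (H : Matrix (Fin n) (Fin n) ℝ)
    (hH : H.PosSemidef) (p : Fin n → ℝ) (x xt : Fin n → ℝ) :
    x ⬝ᵥ H.mulVec xt + p ⬝ᵥ x + p ⬝ᵥ xt ≤
      max (x ⬝ᵥ H.mulVec x + 2 * (p ⬝ᵥ x)) (xt ⬝ᵥ H.mulVec xt + 2 * (p ⬝ᵥ xt)) := by
  have h0 : (0:ℝ) ≤ (x - xt) ⬝ᵥ H.mulVec (x - xt) := by simpa using hH.dotProduct_mulVec_nonneg (x - xt)
  have hsym : xt ⬝ᵥ H.mulVec x = x ⬝ᵥ H.mulVec xt := by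
    have hs : Hᵀ = H := by
      have := hH.1
      simpa [Matrix.IsHermitian, Matrix.conjTranspose_eq_transpose_of_trivial] using this
    rw [Matrix.dotProduct_mulVec, ← Matrix.mulVec_transpose, hs]
    exact dotProduct_comm _ _
  have hexp : (x - xt) ⬝ᵥ H.mulVec (x - xt) =
      x ⬝ᵥ H.mulVec x + xt ⬝ᵥ H.mulVec xt - 2 * (x ⬝ᵥ H.mulVec xt) := by
    rw [Matrix.mulVec_sub, sub_dotProduct,
      dotProduct_sub, dotProduct_sub, hsym]
    ring
  rw [hexp] at h0
  rcases le_total (x ⬝ᵥ H.mulVec x + 2 * (p ⬝ᵥ x)) (xt ⬝ᵥ H.mulVec xt + 2 * (p ⬝ᵥ xt)) with h | h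
  · rw [max_eq_right h]; nlinarith
  · rw [max_eq_left h]; nlinarith

/-- Konno's theorem reducing the concave QP to a bilinear program: over any
set `𝒳`, the upper bounds of `Φ` on `𝒳` coincide with the upper bounds of `Ψ` on `𝒳 × 𝒳`,
and the suprema agree. -/
theorem quadratic_sup_eq_bilinear_sup {n : ℕ} (H : Matrix (Fin n) (Fin n) ℝ)
    (hH : H.PosSemidef) (p : Fin n → ℝ) (X : Set (Fin n → ℝ)) :
    (∀ M : ℝ,
      (∀ x ∈ X, x ⬝ᵥ H.mulVec x + 2 * (p ⬝ᵥ x) ≤ M) ↔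
      (∀ x ∈ X, ∀ xt ∈ X, x ⬝ᵥ H.mulVec xt + p ⬝ᵥ x + p ⬝ᵥ xt ≤ M)) ∧
    sSup ((fun x => x ⬝ᵥ H.mulVec x + 2 * (p ⬝ᵥ x)) '' X) =
      sSup ((fun q : (Fin n → ℝ) × (Fin n → ℝ) =>
        q.1 ⬝ᵥ H.mulVec q.2 + p ⬝ᵥ q.1 + p ⬝ᵥ q.2) '' (X ×ˢ X)) := by
  constructor
  · intro M
    constructor
    · intro hM x hx xt hxt
      exact (konno_key H hH p x xt).trans (max_le (hM x hx) (hM xt hxt))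
    · intro hM x hx
      have := hM x hx x hx
      linarith
  · rcases X.eq_empty_or_nonempty with rfl | hX
    · simp
    · apply csSup_eq_csSup_of_forall_exists_le
      · rintro a ⟨x, hx, rfl⟩
        refine ⟨_, ⟨(x, x), ⟨hx, hx⟩, rfl⟩, le_of_eq ?_⟩
        ring
      · rintro a ⟨⟨x, xt⟩, ⟨hx, hxt⟩, rfl⟩
        rcases le_total (x ⬝ᵥ H.mulVec x + 2 * (p ⬝ᵥ x)) (xt ⬝ᵥ H.mulVec xt + 2 * (p ⬝ᵥ xt)) with h | h
        · exact ⟨_, ⟨xt, hxt, rfl⟩, (konno_key H hH p x xt).trans (by simp [max_eq_right h])⟩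
        · exact ⟨_, ⟨x, hx, rfl⟩, (konno_key H hH p x xt).trans (by simp [max_eq_left h])⟩
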